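/- arXiv:2506.22258 — 4 statements merged into one kernel-verified Lean document; each statement's English description precedes it below -/
import Mathlib

section
/- Let q ≥ 1 and let π be a probability measure on ℝ^d satisfying the L^q-Poincaré inequality PI(q) with constant C_P(q) > 0. Then π satisfies a three-set isoperimetric inequality with functions Υ(t) = C_P(q)·t^q / (2^{2q}·(1 + 2^q·C_P(q)·t^q)) and Ψ(t) = t; that is, for every measurable partition ℝ^d = S₁ ⊔ S₂ ⊔ S₃ with D(S₁,S₂) > 0, π(S₃) ≥ (D(S₁,S₂)^q / (2^{2q}·(C_P(q)^{-1} + 2^q·D(S₁,S₂)^q))) · min{π(S₁), π(S₂)}. -/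
open MeasureTheory ProbabilityTheory Set
open scoped ENNReal NNReal

noncomputable section

abbrev Euc (d : ℕ) := EuclideanSpace ℝ (Fin d)

/-- Total variation distance between two measures. -/
def tvDist {X : Type*} [MeasurableSpace X] (μ ν : Measure X) : ℝ :=
  ⨆ s : {s : Set X // MeasurableSet s}, |(μ s.1).toReal - (ν s.1).toReal|

/-- Euclidean distance between two sets. -/
def setDist' {X : Type*} [Dist X] (A B : Set X) : ℝ :=
  sInf {r | ∃ x ∈ A, ∃ y ∈ B, r = dist x y}

/-- Update the `k`-th coordinate of `x` to `t`. -/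
def updCoord {d : ℕ} (k : Fin d) (t : ℝ) (x : Euc d) : Euc d :=
  WithLp.toLp 2 (Function.update x k t)

/-- Euclidean distance between `x` and `y` after removing coordinate `k`. -/
def distMinus {d : ℕ} (k : Fin d) (x y : Euc d) : ℝ :=
  Real.sqrt (∑ j ∈ Finset.univ.erase k, (x j - y j) ^ 2)

/-- The Gibbs kernel updating coordinate `k` from conditionals `cond`. -/
def gibbsStep {d : ℕ} (cond : Fin d → Euc d → Measure ℝ) (k : Fin d) (x : Euc d) :
    Measure (Euc d) :=
  (cond k x).map (fun t => updCoord k t x)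

/-- Sequentially update coordinates `0, 1, …, n-1`. -/
def sweep {d : ℕ} (cond : Fin d → Euc d → Measure ℝ) : ℕ → Euc d → Measure (Euc d)
  | 0, x => Measure.dirac x
  | (n + 1), x => (sweep cond n x).bind
      (fun u => if h : n < d then gibbsStep cond ⟨n, h⟩ u else Measure.dirac u)

/-- The systematic-scan Gibbs kernel. -/
def PSS {d : ℕ} (cond : Fin d → Euc d → Measure ℝ) (x : Euc d) : Measure (Euc d) :=
  sweep cond d x

/-- The random-scan Gibbs kernel. -/
def PRS {d : ℕ} (cond : Fin d → Euc d → Measure ℝ) (x : Euc d) : Measure (Euc d) :=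
  (d : ℝ≥0∞)⁻¹ • ∑ k : Fin d, gibbsStep cond k x

/-- `N`-fold iterate of a Markov kernel. -/
def iterK {X : Type*} [MeasurableSpace X] (P : X → Measure X) : ℕ → X → Measure X
  | 0, x => Measure.dirac x
  | (n + 1), x => (iterK P n x).bind P

/-- Distribution after `k` steps of `P` started from `μ`. -/
def iterM {X : Type*} [MeasurableSpace X] (P : X → Measure X) (k : ℕ) (μ : Measure X) :
    Measure X :=
  μ.bind (iterK P k)

/-- Conductance of a `π`-invariant Markov kernel `P`. -/
def conductance {X : Type*} [MeasurableSpace X] (π : Measure X) (P : X → Measure X) : ℝ :=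
  sInf {r | ∃ S : Set X, MeasurableSet S ∧ 0 < π S ∧ π S ≤ 1 / 2 ∧
    r = (∫ x in S, (P x Sᶜ).toReal ∂π) / (π S).toReal}

/-- Spectral gap of a `π`-reversible Markov kernel `P`. -/
def spectralGap {X : Type*} [MeasurableSpace X] (π : Measure X) (P : X → Measure X) : ℝ :=
  sInf {r | ∃ f : X → ℝ, MemLp f 2 π ∧ (∫ x, f x ∂π) = 0 ∧ (∫ x, f x ^ 2 ∂π) ≠ 0 ∧
    r = (∫ x, f x * (f x - ∫ y, f y ∂(P x)) ∂π) / ∫ x, f x ^ 2 ∂π}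

/-- ζ-mixing time of `P` started from `μ`, targeting `π`. -/
def mixingTime {X : Type*} [MeasurableSpace X] (π μ : Measure X) (P : X → Measure X)
    (ζ : ℝ) : ℕ∞ :=
  ⨅ (k : ℕ) (_ : tvDist (iterM P k μ) π ≤ ζ), (k : ℕ∞)

/-- `π` satisfies the `L^q`-Poincaré inequality with constant `C`. -/
def PoincareIneq {d : ℕ} (π : Measure (Euc d)) (q C : ℝ) : Prop :=
  ∀ f : Euc d → ℝ, LocallyLipschitz f →
    ∫ x, |f x - ∫ y, f y ∂π| ^ q ∂π ≤ C⁻¹ * ∫ x, ‖fderiv ℝ f x‖ ^ q ∂π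

/-- `π` satisfies the `L^q`-log-Sobolev inequality with constant `C`. -/
def LogSobolevIneq {d : ℕ} (π : Measure (Euc d)) (q C : ℝ) : Prop :=
  ∀ f : Euc d → ℝ, LocallyLipschitz f →
    (∫ x, |f x| ^ q * Real.log (|f x| ^ q) ∂π)
      - (∫ x, |f x| ^ q ∂π) * Real.log (∫ x, |f x| ^ q ∂π)
    ≤ C⁻¹ * ∫ x, ‖fderiv ℝ f x‖ ^ q ∂π

/-- The conditional distributions of `π` (given by `cond`) are `(M, β)`-TV continuous. -/
def TVContinuousConditionals {d : ℕ} (cond : Fin d → Euc d → Measure ℝ) (M β : ℝ) : Prop :=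
  ∀ k : Fin d, ∀ x y : Euc d, tvDist (cond k x) (cond k y) ≤ M * distMinus k x y ^ β

/-- `cond` is a valid family of single-coordinate conditional distributions for `π`:
each `cond k x` is a probability measure, depends only on `x₋ₖ`, is measurable in `x`,
and disintegrates `π`. -/
def IsConditional {d : ℕ} (π : Measure (Euc d)) (cond : Fin d → Euc d → Measure ℝ) : Prop :=
  (∀ k x, IsProbabilityMeasure (cond k x)) ∧
  (∀ k, Measurable (cond k)) ∧
  (∀ k : Fin d, ∀ x y : Euc d, (∀ j, j ≠ k → x j = y j) → cond k x = cond k y) ∧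
  (∀ k : Fin d, π.bind (gibbsStep cond k) = π)

/-- Normalized Gibbs measure with potential `U`. -/
def gibbsTarget {d : ℕ} (U : Euc d → ℝ) : Measure (Euc d) :=
  (∫⁻ x, ENNReal.ofReal (Real.exp (-U x)))⁻¹ •
    (volume.withDensity fun x => ENNReal.ofReal (Real.exp (-U x)))

/-- Explicit one-dimensional conditional distribution of the Gibbs measure with
potential `U`: the `k`-th coordinate given the others (taken from `x`). -/
def gibbsCond {d : ℕ} (U : Euc d → ℝ) (k : Fin d) (x : Euc d) : Measure ℝ :=
  (∫⁻ t, ENNReal.ofReal (Real.exp (-U (updCoord k t x))))⁻¹ •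
    (volume.withDensity fun t => ENNReal.ofReal (Real.exp (-U (updCoord k t x))))


/-- **Three-set isoperimetric inequality from a Poincaré inequality.** If `π` satisfies the
`L^q`-Poincaré inequality with constant `C_P(q) > 0`, then for every measurable partition
`ℝ^d = S₁ ⊔ S₂ ⊔ S₃` with `D(S₁,S₂) > 0`,
`π(S₃) ≥ D(S₁,S₂)^q / (2^{2q}·(C_P(q)⁻¹ + 2^q·D(S₁,S₂)^q)) · min {π(S₁), π(S₂)}`. -/
theorem threeSet_iso_of_poincare {d : ℕ} (π : Measure (Euc d)) [IsProbabilityMeasure π]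
    (q C : ℝ) (hq : 1 ≤ q) (hC : 0 < C) (hPI : PoincareIneq π q C)
    (S₁ S₂ S₃ : Set (Euc d))
    (h₁ : MeasurableSet S₁) (h₂ : MeasurableSet S₂) (h₃ : MeasurableSet S₃)
    (h₁₂ : Disjoint S₁ S₂) (h₁₃ : Disjoint S₁ S₃) (h₂₃ : Disjoint S₂ S₃)
    (hcover : S₁ ∪ S₂ ∪ S₃ = Set.univ)
    (hD : 0 < setDist' S₁ S₂) :
    setDist' S₁ S₂ ^ q / ((2 : ℝ) ^ (2 * q) * (C⁻¹ + (2 : ℝ) ^ q * setDist' S₁ S₂ ^ q))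
        * min (π S₁).toReal (π S₂).toReal
      ≤ (π S₃).toReal := by
  have hq0 : (0:ℝ) < q := lt_of_lt_of_le one_pos hq
  have hπ3 : (0:ℝ) ≤ (π S₃).toReal := ENNReal.toReal_nonneg
  rcases S₁.eq_empty_or_nonempty with rfl | hS₁ne
  · simp only [measure_empty, ENNReal.toReal_zero]
    rw [min_eq_left ENNReal.toReal_nonneg, mul_zero]
    exact hπ3
  rcases S₂.eq_empty_or_nonempty with rfl | hS₂ne
  · simp only [measure_empty, ENNReal.toReal_zero]
    rw [min_eq_right ENNReal.toReal_nonneg, mul_zero]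
    exact hπ3
  set D := setDist' S₁ S₂ with hDdef
  have hD0 : 0 < D := hD
  -- D lower-bounds inf-distance from points in S₂ to S₁
  have hdist : ∀ x ∈ S₂, D ≤ Metric.infDist x S₁ := by
    intro x hx
    rw [Metric.infDist_eq_iInf]
    have : Nonempty S₁ := hS₁ne.to_subtype
    refine le_ciInf fun y => ?_
    have hmem : dist (y : Euc d) x ∈ {r | ∃ a ∈ S₁, ∃ b ∈ S₂, r = dist a b} :=
      ⟨y, y.2, x, hx, rfl⟩
    have hbdd : BddBelow {r | ∃ a ∈ S₁, ∃ b ∈ S₂, r = dist a b} := by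
      refine ⟨0, ?_⟩
      rintro r ⟨a, -, b, -, rfl⟩
      exact dist_nonneg
    calc D ≤ dist (y : Euc d) x := csInf_le hbdd hmem
      _ = dist x y := dist_comm _ _
  -- the test function
  set f : Euc d → ℝ := fun x => min (D⁻¹ • Metric.infDist x S₁) 1 with hfdef
  have hK : LipschitzWith (‖(D⁻¹ : ℝ)‖₊ * 1) f :=
    ((lipschitzWith_smul (D⁻¹ : ℝ)).comp (Metric.lipschitz_infDist_pt S₁)).min_const 1
  have hf0 : ∀ x, 0 ≤ f x := fun x =>
    le_min (by rw [smul_eq_mul]; exact mul_nonneg (inv_nonneg.2 hD0.le) Metric.infDist_nonneg)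
      zero_le_one
  have hf1 : ∀ x, f x ≤ 1 := fun x => min_le_right _ _
  have hfS₁ : ∀ x ∈ S₁, f x = 0 := by
    intro x hx
    simp [hfdef, Metric.infDist_zero_of_mem hx]
  have hfS₂ : ∀ x ∈ S₂, f x = 1 := by
    intro x hx
    have h1 : (1:ℝ) ≤ D⁻¹ • Metric.infDist x S₁ := by
      rw [smul_eq_mul, inv_mul_eq_div, le_div_iff₀ hD0, one_mul]
      exact hdist x hx
    simpa [hfdef] using min_eq_right h1
  have hderiv0 : ∀ x ∈ S₁ ∪ S₂, fderiv ℝ f x = 0 := by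
    rintro x (hx | hx)
    · refine IsLocalMin.fderiv_eq_zero ?_
      refine Filter.Eventually.of_forall fun y => ?_
      rw [hfS₁ x hx]; exact hf0 y
    · refine IsLocalMax.fderiv_eq_zero ?_
      refine Filter.Eventually.of_forall fun y => ?_
      rw [hfS₂ x hx]; exact hf1 y
  have hfd_le : ∀ x, ‖fderiv ℝ f x‖ ≤ D⁻¹ := by
    intro x
    have h := norm_fderiv_le_of_lipschitz ℝ hK (x₀ := x)
    have : ((‖(D⁻¹ : ℝ)‖₊ * 1 : ℝ≥0) : ℝ) = D⁻¹ := by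
      rw [NNReal.coe_mul, NNReal.coe_one, mul_one, coe_nnnorm, Real.norm_eq_abs,
        abs_of_nonneg (inv_nonneg.2 hD0.le)]
    linarith [this ▸ h]
  have hfc : Continuous f := hK.continuous
  have hfint : Integrable f π := by
    refine (integrable_const (1:ℝ)).mono' hfc.aestronglyMeasurable ?_
    refine Filter.Eventually.of_forall fun x => ?_
    rw [Real.norm_eq_abs, abs_of_nonneg (hf0 x)]
    exact hf1 x
  set m := ∫ y, f y ∂π with hm
  have hm0 : 0 ≤ m := integral_nonneg hf0
  have hm1 : m ≤ 1 := by
    have := integral_mono hfint (integrable_const (1:ℝ)) hf1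
    simpa using this
  -- the centered integrand
  set φ : Euc d → ℝ := fun x => |f x - m| ^ q with hφdef
  have hφ0 : ∀ x, 0 ≤ φ x := fun x => Real.rpow_nonneg (abs_nonneg _) q
  have hφc : Continuous φ :=
    ((hfc.sub continuous_const).abs).rpow_const fun x => Or.inr hq0.le
  have hφle1 : ∀ x, φ x ≤ 1 := by
    intro x
    refine Real.rpow_le_one (abs_nonneg _) ?_ hq0.le
    rw [abs_le]
    constructor <;> [linarith [hf0 x]; linarith [hf1 x]]
  have hφint : Integrable φ π := by
    refine (integrable_const (1:ℝ)).mono' hφc.aestronglyMeasurable ?_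
    refine Filter.Eventually.of_forall fun x => ?_
    rw [Real.norm_eq_abs, abs_of_nonneg (hφ0 x)]
    exact hφle1 x
  -- the gradient integrand
  set g : Euc d → ℝ := fun x => ‖fderiv ℝ f x‖ ^ q with hgdef
  have hg0 : ∀ x, 0 ≤ g x := fun x => Real.rpow_nonneg (norm_nonneg _) q
  have hgm : AEStronglyMeasurable g π :=
    (((measurable_fderiv ℝ f).norm.pow measurable_const)).aestronglyMeasurable
  have hgle : ∀ x, g x ≤ D⁻¹ ^ q := fun x =>
    Real.rpow_le_rpow (norm_nonneg _) (hfd_le x) hq0.le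
  have hgint : Integrable g π := by
    refine (integrable_const (D⁻¹ ^ q)).mono' hgm ?_
    refine Filter.Eventually.of_forall fun x => ?_
    rw [Real.norm_eq_abs, abs_of_nonneg (hg0 x)]
    exact hgle x
  -- Poincaré applied to f
  have hPoin : ∫ x, φ x ∂π ≤ C⁻¹ * ∫ x, g x ∂π := hPI f hK.locallyLipschitz
  -- lower bound on the centered integral
  have key1 : ((2:ℝ) ^ q)⁻¹ * min (π S₁).toReal (π S₂).toReal ≤ ∫ x, φ x ∂π := by
    have hunion : ∫ x in S₁ ∪ S₂, φ x ∂π ≤ ∫ x, φ x ∂π :=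
      setIntegral_le_integral hφint (Filter.Eventually.of_forall hφ0)
    have hsplit : ∫ x in S₁ ∪ S₂, φ x ∂π = ∫ x in S₁, φ x ∂π + ∫ x in S₂, φ x ∂π :=
      setIntegral_union h₁₂ h₂ hφint.integrableOn hφint.integrableOn
    have hI1 : ∫ x in S₁, φ x ∂π = (π S₁).toReal * m ^ q := by
      rw [setIntegral_congr_fun h₁ (g := fun _ => m ^ q) (fun x hx => by
        simp [hφdef, hfS₁ x hx, abs_of_nonneg hm0]), setIntegral_const, smul_eq_mul, measureReal_def]
    have hI2 : ∫ x in S₂, φ x ∂π = (π S₂).toReal * (1 - m) ^ q := by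
      rw [setIntegral_congr_fun h₂ (g := fun _ => (1 - m) ^ q) (fun x hx => by
        simp [hφdef, hfS₂ x hx, abs_of_nonneg (by linarith : (0:ℝ) ≤ 1 - m)]),
        setIntegral_const, smul_eq_mul, measureReal_def]
    have hmq0 : 0 ≤ m ^ q := Real.rpow_nonneg hm0 q
    have h1mq0 : 0 ≤ (1 - m) ^ q := Real.rpow_nonneg (by linarith) q
    have hmin1 : min (π S₁).toReal (π S₂).toReal ≤ (π S₁).toReal := min_le_left _ _
    have hmin2 : min (π S₁).toReal (π S₂).toReal ≤ (π S₂).toReal := min_le_right _ _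
    have hmax : (2:ℝ)⁻¹ ≤ max m (1 - m) := by
      rcases le_total m (1 - m) with h | h
      · rw [max_eq_right h]; linarith
      · rw [max_eq_left h]; linarith
    have hpow : ((2:ℝ) ^ q)⁻¹ ≤ m ^ q + (1 - m) ^ q := by
      have h1 : ((2:ℝ) ^ q)⁻¹ = ((2:ℝ)⁻¹) ^ q := (Real.inv_rpow (by norm_num) q).symm
      have h2 : ((2:ℝ)⁻¹) ^ q ≤ (max m (1 - m)) ^ q :=
        Real.rpow_le_rpow (by norm_num) hmax hq0.le
      have h3 : (max m (1 - m)) ^ q ≤ m ^ q + (1 - m) ^ q := by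
        rcases le_total m (1 - m) with h | h
        · rw [max_eq_right h]; linarith
        · rw [max_eq_left h]; linarith
      linarith
    have hminq : 0 ≤ min (π S₁).toReal (π S₂).toReal :=
      le_min ENNReal.toReal_nonneg ENNReal.toReal_nonneg
    calc ((2:ℝ) ^ q)⁻¹ * min (π S₁).toReal (π S₂).toReal
        ≤ (m ^ q + (1 - m) ^ q) * min (π S₁).toReal (π S₂).toReal :=
          mul_le_mul_of_nonneg_right hpow hminq
      _ = m ^ q * min (π S₁).toReal (π S₂).toReal
          + (1 - m) ^ q * min (π S₁).toReal (π S₂).toReal := by ring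
      _ ≤ m ^ q * (π S₁).toReal + (1 - m) ^ q * (π S₂).toReal :=
          add_le_add (mul_le_mul_of_nonneg_left hmin1 hmq0)
            (mul_le_mul_of_nonneg_left hmin2 h1mq0)
      _ = ∫ x in S₁, φ x ∂π + ∫ x in S₂, φ x ∂π := by rw [hI1, hI2]; ring
      _ = ∫ x in S₁ ∪ S₂, φ x ∂π := hsplit.symm
      _ ≤ ∫ x, φ x ∂π := hunion
  -- upper bound on gradient integral
  have key2 : ∫ x, g x ∂π ≤ (D ^ q)⁻¹ * (π S₃).toReal := by
    have hg_eq : ∀ x, g x = S₃.indicator g x := by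
      intro x
      by_cases hx : x ∈ S₃
      · rw [Set.indicator_of_mem hx]
      · rw [Set.indicator_of_notMem hx]
        have hx' : x ∈ S₁ ∪ S₂ := by
          have hxu : x ∈ S₁ ∪ S₂ ∪ S₃ := hcover ▸ Set.mem_univ x
          rcases hxu with h | h
          · exact h
          · exact absurd h hx
        simp [hgdef, hderiv0 x hx', Real.zero_rpow (ne_of_gt hq0)]
    calc ∫ x, g x ∂π = ∫ x in S₃, g x ∂π := by
          rw [← integral_indicator h₃]
          exact integral_congr_ae (Filter.Eventually.of_forall hg_eq)
      _ ≤ ∫ _ in S₃, D⁻¹ ^ q ∂π := by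
          refine setIntegral_mono_on hgint.integrableOn
            (integrableOn_const (measure_ne_top π S₃) enorm_ne_top) h₃ fun x _ => hgle x
      _ = (π S₃).toReal * D⁻¹ ^ q := by rw [setIntegral_const, smul_eq_mul, measureReal_def]
      _ = (D ^ q)⁻¹ * (π S₃).toReal := by
          rw [Real.inv_rpow hD0.le]; ring
  -- combine
  set A := min (π S₁).toReal (π S₂).toReal with hA
  have hA0 : 0 ≤ A := le_min ENNReal.toReal_nonneg ENNReal.toReal_nonneg
  set P := (π S₃).toReal with hP
  have hE : (0:ℝ) < (2:ℝ) ^ q := Real.rpow_pos_of_pos two_pos q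
  have hE1 : (1:ℝ) ≤ (2:ℝ) ^ q := by
    calc (1:ℝ) = (2:ℝ) ^ (0:ℝ) := (Real.rpow_zero 2).symm
      _ ≤ (2:ℝ) ^ q := Real.rpow_le_rpow_of_exponent_le one_le_two hq0.le
  have hDq : (0:ℝ) < D ^ q := Real.rpow_pos_of_pos hD0 q
  have hchain : ((2:ℝ) ^ q)⁻¹ * A ≤ C⁻¹ * ((D ^ q)⁻¹ * P) := by
    calc ((2:ℝ) ^ q)⁻¹ * A ≤ ∫ x, φ x ∂π := key1
      _ ≤ C⁻¹ * ∫ x, g x ∂π := hPoin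
      _ ≤ C⁻¹ * ((D ^ q)⁻¹ * P) :=
          mul_le_mul_of_nonneg_left key2 (inv_nonneg.2 hC.le)
  have hfin : C * D ^ q / (2:ℝ) ^ q * A ≤ P := by
    have h := mul_le_mul_of_nonneg_left hchain (le_of_lt (mul_pos hC hDq))
    calc C * D ^ q / (2:ℝ) ^ q * A = C * D ^ q * (((2:ℝ) ^ q)⁻¹ * A) := by ring
      _ ≤ C * D ^ q * (C⁻¹ * ((D ^ q)⁻¹ * P)) := h
      _ = P := by field_simp
  have hcoef : D ^ q / ((2:ℝ) ^ (2 * q) * (C⁻¹ + (2:ℝ) ^ q * D ^ q))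
      ≤ C * D ^ q / (2:ℝ) ^ q := by
    have hexp : (2:ℝ) ^ (2 * q) = (2:ℝ) ^ q * (2:ℝ) ^ q := by
      rw [two_mul, Real.rpow_add two_pos]
    rw [hexp]
    have hC' : (0:ℝ) < C⁻¹ := inv_pos.2 hC
    have hX : (2:ℝ) ^ q / C ≤ (2:ℝ) ^ q * (2:ℝ) ^ q * (C⁻¹ + (2:ℝ) ^ q * D ^ q) := by
      have h1 : (2:ℝ) ^ q * (2:ℝ) ^ q * C⁻¹
          ≤ (2:ℝ) ^ q * (2:ℝ) ^ q * (C⁻¹ + (2:ℝ) ^ q * D ^ q) := by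
        nlinarith [mul_pos (mul_pos hE hE) (mul_pos hE hDq)]
      have h2 : (2:ℝ) ^ q * C⁻¹ ≤ (2:ℝ) ^ q * (2:ℝ) ^ q * C⁻¹ := by
        nlinarith [mul_pos hE hC']
      have h3 : (2:ℝ) ^ q / C = (2:ℝ) ^ q * C⁻¹ := div_eq_mul_inv _ _
      linarith
    have hXpos : (0:ℝ) < (2:ℝ) ^ q / C := div_pos hE hC
    calc D ^ q / ((2:ℝ) ^ q * (2:ℝ) ^ q * (C⁻¹ + (2:ℝ) ^ q * D ^ q))
        ≤ D ^ q / ((2:ℝ) ^ q / C) := by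
          have hbig : (0:ℝ) < (2:ℝ) ^ q * (2:ℝ) ^ q * (C⁻¹ + (2:ℝ) ^ q * D ^ q) := by
            positivity
          exact (div_le_div_iff_of_pos_left hDq hbig hXpos).mpr hX
      _ = C * D ^ q / (2:ℝ) ^ q := by field_simp
  calc D ^ q / ((2:ℝ) ^ (2 * q) * (C⁻¹ + (2:ℝ) ^ q * D ^ q)) * A
      ≤ C * D ^ q / (2:ℝ) ^ q * A := mul_le_mul_of_nonneg_right hcoef hA0
    _ ≤ P := hfin

end
end

section
/- Let q ≥ 1 and let π be a probability measure on ℝ^d satisfying the L^q-log-Sobolev inequality LSI(q) with constant C_LS(q) > 0. Then π satisfies a three-set isoperimetric inequality with functions Υ(t) = C_LS(q)·t^q / (1 + (1 + e^{-1})·C_LS(q)·t^q) and Ψ(t) = (t/2)·log(2/t); that is, for every measurable partition ℝ^d = S₁ ⊔ S₂ ⊔ S₃ with D(S₁,S₂) > 0, π(S₃) ≥ (D(S₁,S₂)^q / (C_LS(q)^{-1} + (1 + e^{-1})·D(S₁,S₂)^q)) · (min{π(S₁),π(S₂)}/2) · log(2/min{π(S₁),π(S₂)}). -/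
open MeasureTheory ProbabilityTheory Set
open scoped ENNReal NNReal

noncomputable section

lemma myF1 (t : ℝ) (ht : 0 ≤ t) : -Real.exp (-1) ≤ t * Real.log t := by
  rcases ht.eq_or_lt with h | h
  · simp only [← h, zero_mul]
    linarith [Real.exp_pos (-1 : ℝ)]
  · set L := Real.log t with hL
    have h1 : -L ≤ Real.exp (-L - 1) := by
      have := Real.add_one_le_exp (-L - 1)
      linarith
    have h2 : Real.exp (-L - 1) * t = Real.exp (-1) := by
      rw [← Real.exp_log h, ← Real.exp_add]
      ring_nf
      rw [hL]; ring_nf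
    have h3 : 0 ≤ t * (L + Real.exp (-L - 1)) := mul_nonneg h.le (by linarith)
    nlinarith
lemma myF2 {m a : ℝ} (hm : 0 < m) (hma : m ≤ a) (ha1 : a ≤ 1) :
    a * Real.log a - m * Real.log m ≤ a - m := by
  have ha : 0 < a := hm.trans_le hma
  have h1 : Real.log a - Real.log m ≤ a / m - 1 := by
    have := Real.log_le_sub_one_of_pos (div_pos ha hm)
    rwa [Real.log_div ha.ne' hm.ne'] at this
  have h2 : Real.log a ≤ 0 := Real.log_nonpos ha.le ha1
  have h3 : m * (a / m - 1) = a - m := by field_simp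
  nlinarith [mul_nonneg (sub_nonneg.2 hma) (neg_nonneg.2 h2),
    mul_le_mul_of_nonneg_left h1 hm.le]
lemma myF3 {m : ℝ} (hm : 0 < m) (hm2 : m ≤ 1 / 2) :
    m / 2 * Real.log (2 / m) ≤ -(m * Real.log m) := by
  rw [Real.log_div two_ne_zero hm.ne']
  have h2 : Real.log 2 + Real.log m ≤ 0 := by
    have : Real.log m ≤ Real.log 2⁻¹ := Real.log_le_log hm (by linarith)
    rw [Real.log_inv] at this
    linarith
  nlinarith [mul_nonneg hm.le (neg_nonneg.2 h2)]

lemma myAux {d : ℕ} (π : Measure (Euc d)) [IsProbabilityMeasure π]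
    (q C : ℝ) (hq : 1 ≤ q) (hC : 0 < C) (hLSI : LogSobolevIneq π q C)
    (S₁ S₂ S₃ : Set (Euc d))
    (h₁ : MeasurableSet S₁) (h₃ : MeasurableSet S₃)
    (h₁₃ : Disjoint S₁ S₃)
    (hcover : S₁ ∪ S₂ ∪ S₃ = Set.univ)
    (hD : 0 < setDist' S₁ S₂)
    (hm : 0 < (π S₁).toReal) (hhalf : (π S₁).toReal ≤ 1 / 2) :
    setDist' S₁ S₂ ^ q / (C⁻¹ + (1 + Real.exp (-1)) * setDist' S₁ S₂ ^ q)
        * ((π S₁).toReal / 2) * Real.log (2 / (π S₁).toReal)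
      ≤ (π S₃).toReal := by
  have hq0 : (0:ℝ) < q := lt_of_lt_of_le one_pos hq
  set D := setDist' S₁ S₂ with hDdef
  -- S₁ nonempty
  have hS₁ne : S₁.Nonempty := by
    rw [nonempty_iff_ne_empty]
    rintro rfl
    simp at hm
  -- distance lower bound
  have hpair : ∀ x ∈ S₁, ∀ y ∈ S₂, D ≤ dist x y := by
    intro x hx y hy
    refine csInf_le ⟨0, ?_⟩ ⟨x, hx, y, hy, rfl⟩
    rintro r ⟨a, _, b, _, rfl⟩
    exact dist_nonneg
  have hinf : ∀ y ∈ S₂, D ≤ Metric.infDist y S₁ := by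
    intro y hy
    by_contra hlt
    push_neg at hlt
    obtain ⟨x, hx, hxd⟩ := (Metric.infDist_lt_iff hS₁ne).1 hlt
    have := hpair x hx y hy
    rw [dist_comm] at hxd
    linarith
  -- the test function
  set f : Euc d → ℝ := fun x => max (1 - Metric.infDist x S₁ / D) 0 with hfdef
  have hf0 : ∀ x, 0 ≤ f x := fun x => le_max_right _ _
  have hf1 : ∀ x, f x ≤ 1 := by
    intro x
    apply max_le _ zero_le_one
    have h1 : 0 ≤ Metric.infDist x S₁ / D := div_nonneg Metric.infDist_nonneg hD.le
    linarith
  have hfS₁ : ∀ x ∈ S₁, f x = 1 := by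
    intro x hx
    simp [hfdef, Metric.infDist_zero_of_mem hx]
  have hfS₂ : ∀ x ∈ S₂, f x = 0 := by
    intro x hx
    have h1 : (1:ℝ) ≤ Metric.infDist x S₁ / D := (one_le_div hD).2 (hinf x hx)
    simp only [hfdef]
    rw [max_eq_right]
    linarith
  -- Lipschitz
  have hlip : LipschitzWith (Real.toNNReal D⁻¹) f := by
    apply LipschitzWith.of_dist_le_mul
    intro x y
    rw [Real.coe_toNNReal _ (by positivity)]
    have h3 : |Metric.infDist x S₁ - Metric.infDist y S₁| ≤ dist x y := by
      have := (Metric.lipschitz_infDist_pt S₁).dist_le_mul x y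
      rwa [Real.dist_eq, NNReal.coe_one, one_mul] at this
    calc dist (f x) (f y)
        ≤ |(1 - Metric.infDist x S₁ / D) - (1 - Metric.infDist y S₁ / D)| := by
          rw [Real.dist_eq]; exact abs_max_sub_max_le_abs _ _ _
      _ = |Metric.infDist x S₁ - Metric.infDist y S₁| / D := by
          have heq : (1 - Metric.infDist x S₁ / D) - (1 - Metric.infDist y S₁ / D)
              = (Metric.infDist y S₁ - Metric.infDist x S₁) / D := by
            field_simp
            ring
          rw [heq, abs_div, abs_of_pos hD, abs_sub_comm]
      _ ≤ dist x y / D := by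
          gcongr
      _ = D⁻¹ * dist x y := by ring
  have hfcont : Continuous f := hlip.continuous
  have hloclip : LocallyLipschitz f := hlip.locallyLipschitz
  -- pointwise derivative bounds
  have hgradle : ∀ x, ‖fderiv ℝ f x‖ ≤ D⁻¹ := by
    intro x
    have := norm_fderiv_le_of_lipschitz ℝ hlip (x₀ := x)
    rwa [Real.coe_toNNReal _ (by positivity)] at this
  have hgradzero₁ : ∀ x ∈ S₁, fderiv ℝ f x = 0 := by
    intro x hx
    apply IsLocalMax.fderiv_eq_zero
    apply Filter.Eventually.of_forall
    intro y
    rw [hfS₁ x hx]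
    exact hf1 y
  have hgradzero₂ : ∀ x ∈ S₂, fderiv ℝ f x = 0 := by
    intro x hx
    apply IsLocalMin.fderiv_eq_zero
    apply Filter.Eventually.of_forall
    intro y
    rw [hfS₂ x hx]
    exact hf0 y
  have hmem : ∀ x : Euc d, x ∈ S₁ ∪ S₂ ∪ S₃ := by
    intro x; rw [hcover]; exact mem_univ x
  have hgradptw : ∀ x, ‖fderiv ℝ f x‖ ^ q ≤ S₃.indicator (fun _ => D⁻¹ ^ q) x := by
    intro x
    rcases hmem x with (hx | hx) | hx
    · rw [hgradzero₁ x hx, norm_zero, Real.zero_rpow hq0.ne',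
        indicator_of_notMem (disjoint_left.1 h₁₃ hx)]
    · rw [hgradzero₂ x hx, norm_zero, Real.zero_rpow hq0.ne']
      exact indicator_nonneg (fun _ _ => Real.rpow_nonneg (by positivity) q) x
    · rw [indicator_of_mem hx]
      exact Real.rpow_le_rpow (norm_nonneg _) (hgradle x) hq0.le
  -- the entropy function h
  set g : Euc d → ℝ := fun x => |f x| ^ q with hgdef
  have hg0 : ∀ x, 0 ≤ g x := fun x => Real.rpow_nonneg (abs_nonneg _) q
  have hg1 : ∀ x, g x ≤ 1 := fun x =>
    Real.rpow_le_one (abs_nonneg _) (abs_le.2 ⟨by linarith [hf0 x], hf1 x⟩) hq0.le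
  have hgS₁ : ∀ x ∈ S₁, g x = 1 := by
    intro x hx
    simp [hgdef, hfS₁ x hx]
  have hgS₂ : ∀ x ∈ S₂, g x = 0 := by
    intro x hx
    simp [hgdef, hfS₂ x hx, Real.zero_rpow hq0.ne']
  have hgcont : Continuous g := by
    exact (Real.continuous_rpow_const hq0.le).comp hfcont.abs
  -- integrability
  have hglogmeas : AEStronglyMeasurable (fun x => g x * Real.log (g x)) π := by
    exact (hgcont.measurable.mul (Real.measurable_log.comp hgcont.measurable)).aestronglyMeasurable
  have hglogbd : ∀ x, ‖g x * Real.log (g x)‖ ≤ Real.exp (-1) := by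
    intro x
    rw [Real.norm_eq_abs, abs_le]
    constructor
    · linarith [myF1 (g x) (hg0 x)]
    · have h1 : g x * Real.log (g x) ≤ 0 :=
        mul_nonpos_of_nonneg_of_nonpos (hg0 x) (Real.log_nonpos (hg0 x) (hg1 x))
      linarith [Real.exp_pos (-1:ℝ)]
  have hglogint : Integrable (fun x => g x * Real.log (g x)) π :=
    Integrable.mono' (integrable_const (Real.exp (-1))) hglogmeas
      (Filter.Eventually.of_forall hglogbd)
  have hgint : Integrable g π :=
    Integrable.mono' (integrable_const 1) hgcont.measurable.aestronglyMeasurable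
      (Filter.Eventually.of_forall fun x => by
        rw [Real.norm_eq_abs, abs_of_nonneg (hg0 x)]; exact hg1 x)
  have hgradmeas : AEStronglyMeasurable (fun x => ‖fderiv ℝ f x‖ ^ q) π :=
    ((Real.continuous_rpow_const hq0.le).measurable.comp
      (measurable_fderiv ℝ f).norm).aestronglyMeasurable
  have hgradint : Integrable (fun x => ‖fderiv ℝ f x‖ ^ q) π :=
    Integrable.mono' (integrable_const (D⁻¹ ^ q)) hgradmeas
      (Filter.Eventually.of_forall fun x => by
        rw [Real.norm_eq_abs, abs_of_nonneg (Real.rpow_nonneg (norm_nonneg _) q)]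
        exact Real.rpow_le_rpow (norm_nonneg _) (hgradle x) hq0.le)
  -- abbreviations for measures
  set m := (π S₁).toReal with hmdef
  set s3 := (π S₃).toReal with hs3def
  have hs3 : 0 ≤ s3 := ENNReal.toReal_nonneg
  -- integral bounds
  set a := ∫ x, g x ∂π with hadef
  have ha_lb : m ≤ a := by
    have hle : ∀ x, S₁.indicator (fun _ => (1:ℝ)) x ≤ g x := by
      intro x
      by_cases hx : x ∈ S₁
      · rw [indicator_of_mem hx, hgS₁ x hx]
      · rw [indicator_of_notMem hx]; exact hg0 x
    have := integral_mono ((integrable_const (1:ℝ)).indicator h₁) hgint hle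
    rwa [integral_indicator_const _ h₁, smul_eq_mul, mul_one] at this
  have hunion13 : (π (S₁ ∪ S₃)).toReal = m + s3 := by
    rw [measure_union h₁₃ h₃, ENNReal.toReal_add (measure_ne_top π S₁) (measure_ne_top π S₃)]
  have ha_ub : a ≤ m + s3 := by
    have hle : ∀ x, g x ≤ (S₁ ∪ S₃).indicator (fun _ => (1:ℝ)) x := by
      intro x
      by_cases hx : x ∈ S₁ ∪ S₃
      · rw [indicator_of_mem hx]; exact hg1 x
      · rw [indicator_of_notMem hx]
        have hx2 : x ∈ S₂ := by
          rcases hmem x with (h | h) | h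
          · exact absurd (Or.inl h) hx
          · exact h
          · exact absurd (Or.inr h) hx
        rw [hgS₂ x hx2]
    have := integral_mono hgint ((integrable_const (1:ℝ)).indicator (h₁.union h₃)) hle
    rwa [integral_indicator_const _ (h₁.union h₃), smul_eq_mul, mul_one, measureReal_def, hunion13] at this
  have hsum1 : m + s3 ≤ 1 := by
    rw [← hunion13]
    exact ENNReal.toReal_le_of_le_ofReal one_pos.le (by simpa using prob_le_one)
  -- entropy integral lower bound
  have hlog_lb : -Real.exp (-1) * s3 ≤ ∫ x, g x * Real.log (g x) ∂π := by
    have hle : ∀ x, S₃.indicator (fun _ => -Real.exp (-1)) x ≤ g x * Real.log (g x) := by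
      intro x
      by_cases hx : x ∈ S₃
      · rw [indicator_of_mem hx]
        exact myF1 (g x) (hg0 x)
      · rw [indicator_of_notMem hx]
        rcases hmem x with (h | h) | h
        · rw [hgS₁ x h]; simp
        · rw [hgS₂ x h]; simp
        · exact absurd h hx
    have := integral_mono ((integrable_const (-Real.exp (-1))).indicator h₃) hglogint hle
    rwa [integral_indicator_const _ h₃, smul_eq_mul, mul_comm] at this
  -- gradient integral upper bound
  have hgrad_ub : ∫ x, ‖fderiv ℝ f x‖ ^ q ∂π ≤ D⁻¹ ^ q * s3 := by
    have := integral_mono hgradint ((integrable_const (D⁻¹ ^ q)).indicator h₃) hgradptw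
    rwa [integral_indicator_const _ h₃, smul_eq_mul, mul_comm] at this
  -- apply LSI
  have hLSIkey := hLSI f hloclip
  have hE1 : (∫ x, g x * Real.log (g x) ∂π) - a * Real.log a ≤ C⁻¹ * (D⁻¹ ^ q * s3) := by
    refine le_trans hLSIkey ?_
    exact mul_le_mul_of_nonneg_left hgrad_ub (by positivity)
  have hE2 : -(a * Real.log a) ≤ (C⁻¹ * D⁻¹ ^ q + Real.exp (-1)) * s3 := by nlinarith
  have ha1 : a ≤ 1 := ha_ub.trans hsum1
  have hF2 := myF2 hm (hmdef ▸ ha_lb) ha1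
  have hmlog : -(m * Real.log m) ≤ (C⁻¹ * D⁻¹ ^ q + 1 + Real.exp (-1)) * s3 := by nlinarith
  have hF3 := myF3 hm hhalf
  -- final algebra
  have hDq : (0:ℝ) < D ^ q := Real.rpow_pos_of_pos hD q
  have hinvq : D⁻¹ ^ q = (D ^ q)⁻¹ := Real.inv_rpow hD.le q
  set R := C⁻¹ * D⁻¹ ^ q + 1 + Real.exp (-1) with hRdef
  have hR : 0 < R := by
    rw [hRdef]
    positivity
  have hcoeff : D ^ q / (C⁻¹ + (1 + Real.exp (-1)) * D ^ q) = R⁻¹ := by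
    rw [hRdef, hinvq]
    rw [div_eq_iff (by positivity), inv_eq_one_div, div_mul_eq_mul_div, eq_div_iff (by positivity)]
    field_simp
    ring
  have hP : 0 ≤ m / 2 * Real.log (2 / m) := by
    apply mul_nonneg (by linarith)
    apply Real.log_nonneg
    rw [le_div_iff₀ hm]
    linarith
  have hPR : m / 2 * Real.log (2 / m) ≤ R * s3 := le_trans hF3 hmlog
  calc D ^ q / (C⁻¹ + (1 + Real.exp (-1)) * D ^ q) * (m / 2) * Real.log (2 / m)
      = R⁻¹ * (m / 2 * Real.log (2 / m)) := by rw [hcoeff]; ring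
    _ ≤ R⁻¹ * (R * s3) := mul_le_mul_of_nonneg_left hPR (by positivity)
    _ = s3 := by field_simp


lemma setDist'_comm {X : Type*} [MetricSpace X] (A B : Set X) :
    setDist' A B = setDist' B A := by
  unfold setDist'
  congr 1
  ext r
  constructor
  · rintro ⟨x, hx, y, hy, rfl⟩
    exact ⟨y, hy, x, hx, dist_comm x y⟩
  · rintro ⟨x, hx, y, hy, rfl⟩
    exact ⟨y, hy, x, hx, dist_comm x y⟩

/-- **Three-set isoperimetric inequality from a log-Sobolev inequality.** If `π` satisfies the
`L^q`-log-Sobolev inequality with constant `C_LS(q) > 0`, then for every measurable partition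
`ℝ^d = S₁ ⊔ S₂ ⊔ S₃` with `D(S₁,S₂) > 0`,
`π(S₃) ≥ D(S₁,S₂)^q / (C_LS(q)⁻¹ + (1+e⁻¹)·D(S₁,S₂)^q) · (m/2)·log(2/m)` where
`m = min {π(S₁), π(S₂)}`. -/
theorem threeSet_iso_of_logSobolev {d : ℕ} (π : Measure (Euc d)) [IsProbabilityMeasure π]
    (q C : ℝ) (hq : 1 ≤ q) (hC : 0 < C) (hLSI : LogSobolevIneq π q C)
    (S₁ S₂ S₃ : Set (Euc d))
    (h₁ : MeasurableSet S₁) (h₂ : MeasurableSet S₂) (h₃ : MeasurableSet S₃)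
    (h₁₂ : Disjoint S₁ S₂) (h₁₃ : Disjoint S₁ S₃) (h₂₃ : Disjoint S₂ S₃)
    (hcover : S₁ ∪ S₂ ∪ S₃ = Set.univ)
    (hD : 0 < setDist' S₁ S₂) :
    setDist' S₁ S₂ ^ q / (C⁻¹ + (1 + Real.exp (-1)) * setDist' S₁ S₂ ^ q)
        * (min (π S₁).toReal (π S₂).toReal / 2)
        * Real.log (2 / min (π S₁).toReal (π S₂).toReal)
      ≤ (π S₃).toReal := by
  by_cases hmin : min (π S₁).toReal (π S₂).toReal = 0
  · rw [hmin]
    norm_num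
  · have hminpos : 0 < min (π S₁).toReal (π S₂).toReal :=
      lt_of_le_of_ne (le_min ENNReal.toReal_nonneg ENNReal.toReal_nonneg) (Ne.symm hmin)
    have hsum : (π S₁).toReal + (π S₂).toReal ≤ 1 := by
      rw [← ENNReal.toReal_add (measure_ne_top π S₁) (measure_ne_top π S₂),
        ← measure_union h₁₂ h₂]
      exact ENNReal.toReal_le_of_le_ofReal one_pos.le (by simpa using prob_le_one)
    rcases le_total (π S₁).toReal (π S₂).toReal with hle | hle
    · rw [min_eq_left hle] at *
      exact myAux π q C hq hC hLSI S₁ S₂ S₃ h₁ h₃ h₁₃ hcover hD hminpos (by linarith)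
    · rw [min_eq_right hle] at *
      rw [setDist'_comm S₁ S₂] at hD ⊢
      have hcover' : S₂ ∪ S₁ ∪ S₃ = Set.univ := by
        rw [show S₂ ∪ S₁ = S₁ ∪ S₂ from Set.union_comm _ _]
        exact hcover
      exact myAux π q C hq hC hLSI S₂ S₁ S₃ h₂ h₃ h₂₃ hcover' hD hminpos (by linarith)


end
end

section
/- Let π(dθ, ds) ∝ e^{−U(θ,s)} dθ ds be a probability measure on ℝ^{d₁} × ℝ^{d₂} whose potential U is L-Lipschitz continuous. Define V(s) = −log(∫_{ℝ^{d₁}} e^{−U(θ,s)} dθ), so that the marginal distribution of π on ℝ^{d₂} is π(ds) ∝ e^{−V(s)} ds. Then V is L-Lipschitz continuous; that is, every marginal distribution of an L-log-Lipschitz distribution is L-log-Lipschitz. -/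
open MeasureTheory ProbabilityTheory Set
open scoped ENNReal NNReal

noncomputable section

/-- Concatenate `θ ∈ ℝ^{d₁}` and `s ∈ ℝ^{d₂}` into a point of `ℝ^{d₁} × ℝ^{d₂}`,
viewed as the Euclidean space indexed by `Fin d₁ ⊕ Fin d₂`. -/
def glue {d₁ d₂ : ℕ} (θ : EuclideanSpace ℝ (Fin d₁)) (s : EuclideanSpace ℝ (Fin d₂)) :
    EuclideanSpace ℝ (Fin d₁ ⊕ Fin d₂) :=
  WithLp.toLp 2 (Sum.elim θ s)

lemma glue_sub_norm_right {d₁ d₂ : ℕ} (θ : Euc d₁) (s t : Euc d₂) :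
    ‖glue θ s - glue θ t‖ = ‖s - t‖ := by
  simp only [EuclideanSpace.norm_eq]
  congr 1
  rw [Fintype.sum_sum_type]
  simp [glue]

lemma glue_sub_norm_left {d₁ d₂ : ℕ} (θ θ' : Euc d₁) (s : Euc d₂) :
    ‖glue θ s - glue θ' s‖ = ‖θ - θ'‖ := by
  simp only [EuclideanSpace.norm_eq]
  congr 1
  rw [Fintype.sum_sum_type]
  simp [glue]

lemma glue_measurePreserving {d₁ d₂ : ℕ} :
    MeasurePreserving (fun p : Euc d₁ × Euc d₂ => glue p.1 p.2)
      (volume.prod volume) volume := by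
  have h1 :
      MeasurePreserving (Prod.map ((MeasurableEquiv.toLp 2 (Fin d₁ → ℝ)).symm)
        ((MeasurableEquiv.toLp 2 (Fin d₂ → ℝ)).symm))
        (volume.prod volume) (volume.prod volume) :=
    (EuclideanSpace.volume_preserving_symm_measurableEquiv_toLp (Fin d₁)).prod
      (EuclideanSpace.volume_preserving_symm_measurableEquiv_toLp (Fin d₂))
  have h2 := MeasureTheory.volume_measurePreserving_sumPiEquivProdPi_symm
    (fun _ : Fin d₁ ⊕ Fin d₂ => ℝ)
  have h3 := (EuclideanSpace.volume_preserving_symm_measurableEquiv_toLp (Fin d₁ ⊕ Fin d₂)).symm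
  have := (h3.comp h2).comp h1
  exact this

/-- **Marginals of log-Lipschitz distributions are log-Lipschitz.** If the potential `U` on
`ℝ^{d₁} × ℝ^{d₂}` is `L`-Lipschitz and `e^{−U}` is integrable, then the marginal potential
`V(s) = −log ∫ e^{−U(θ,s)} dθ` is `L`-Lipschitz. -/
theorem marginal_log_lipschitz (d₁ d₂ : ℕ) (L : ℝ) (hL : 0 < L)
    (U : EuclideanSpace ℝ (Fin d₁ ⊕ Fin d₂) → ℝ)
    (hLip : ∀ x y : EuclideanSpace ℝ (Fin d₁ ⊕ Fin d₂), |U x - U y| ≤ L * ‖x - y‖)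
    (hInt : Integrable fun x : EuclideanSpace ℝ (Fin d₁ ⊕ Fin d₂) => Real.exp (-U x))
    (V : EuclideanSpace ℝ (Fin d₂) → ℝ)
    (hV : ∀ s, V s = -Real.log (∫ θ : EuclideanSpace ℝ (Fin d₁),
      Real.exp (-U (glue θ s)))) :
    ∀ s t : EuclideanSpace ℝ (Fin d₂), |V s - V t| ≤ L * ‖s - t‖ := by
  set f : Euc d₂ → ℝ := fun s => ∫ θ : Euc d₁, Real.exp (-U (glue θ s)) with hf
  -- pointwise comparison
  have key : ∀ (s t : Euc d₂) (θ : Euc d₁),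
      Real.exp (-U (glue θ s)) ≤ Real.exp (L * ‖s - t‖) * Real.exp (-U (glue θ t)) := by
    intro s t θ
    rw [← Real.exp_add, Real.exp_le_exp]
    have h := abs_le.1 (hLip (glue θ t) (glue θ s))
    rw [glue_sub_norm_right, norm_sub_rev] at h
    linarith [h.1]
  -- continuity of slices
  have hUc : Continuous U := by
    apply (LipschitzWith.of_dist_le_mul (K := ⟨L, hL.le⟩) ?_).continuous
    intro x y
    rw [Real.dist_eq, dist_eq_norm]
    exact hLip x y
  have hslice_cont : ∀ s : Euc d₂, Continuous fun θ : Euc d₁ => Real.exp (-U (glue θ s)) := by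
    intro s
    have hg : Continuous fun θ : Euc d₁ => glue θ s := by
      apply (LipschitzWith.of_dist_le_mul (K := 1) ?_).continuous
      intro θ θ'
      rw [dist_eq_norm, dist_eq_norm, glue_sub_norm_left, NNReal.coe_one, one_mul]
    exact Real.continuous_exp.comp (hUc.comp hg).neg
  -- integrability for some s₀ via Fubini
  have hprod : Integrable (fun p : Euc d₁ × Euc d₂ => Real.exp (-U (glue p.1 p.2)))
      (volume.prod volume) := (glue_measurePreserving.integrable_comp
      (Real.continuous_exp.comp hUc.neg).aestronglyMeasurable).2 hInt
  obtain ⟨s₀, hs₀⟩ := hprod.prod_left_ae.exists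
  -- integrability for all s
  have hIntAll : ∀ s : Euc d₂, Integrable fun θ : Euc d₁ => Real.exp (-U (glue θ s)) := by
    intro s
    refine Integrable.mono' (hs₀.const_mul (Real.exp (L * ‖s - s₀‖)))
      (hslice_cont s).aestronglyMeasurable ?_
    filter_upwards with θ
    rw [Real.norm_eq_abs, abs_of_pos (Real.exp_pos _)]
    exact key s s₀ θ
  have hpos : ∀ s, 0 < f s := by
    intro s
    exact integral_exp_pos (f := fun θ : Euc d₁ => -U (glue θ s)) (hIntAll s)
  have hle : ∀ s t : Euc d₂, f s ≤ Real.exp (L * ‖s - t‖) * f t := by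
    intro s t
    calc f s ≤ ∫ θ : Euc d₁, Real.exp (L * ‖s - t‖) * Real.exp (-U (glue θ t)) :=
          integral_mono (hIntAll s) ((hIntAll t).const_mul _) (key s t)
      _ = Real.exp (L * ‖s - t‖) * f t := integral_const_mul _ _
  have hlog : ∀ s t : Euc d₂, Real.log (f s) ≤ L * ‖s - t‖ + Real.log (f t) := by
    intro s t
    calc Real.log (f s) ≤ Real.log (Real.exp (L * ‖s - t‖) * f t) :=
          Real.log_le_log (hpos s) (hle s t)
      _ = L * ‖s - t‖ + Real.log (f t) := by
          rw [Real.log_mul (Real.exp_ne_zero _) (hpos t).ne', Real.log_exp]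
  intro s t
  rw [hV s, hV t]
  have hfs : (∫ θ : EuclideanSpace ℝ (Fin d₁), Real.exp (-U (glue θ s))) = f s := rfl
  have hft : (∫ θ : EuclideanSpace ℝ (Fin d₁), Real.exp (-U (glue θ t))) = f t := rfl
  rw [hfs, hft, abs_sub_comm, abs_le]
  constructor
  · have := hlog t s
    rw [norm_sub_rev t s] at this
    simp only [neg_sub_neg]
    linarith
  · have := hlog s t
    simp only [neg_sub_neg]
    linarith


end
end

section
/- Let π(dx) ∝ e^{−U(x)} dx be a probability measure on ℝ^d whose potential U is L-Lipschitz continuous. Then the conditional distributions of π are (√L, 1/2)-TV continuous: for all k ∈ {1,…,d} and all x, y ∈ ℝ^d, ‖π(·|x_{−k}) − π(·|y_{−k})‖_TV ≤ √(L·|x_{−k} − y_{−k}|). -/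
open MeasureTheory ProbabilityTheory Set
open scoped ENNReal NNReal

noncomputable section

private lemma tv_aux_exp (s : ℝ) (hs : 0 ≤ s) : 1 - Real.exp (-(2*s)) ≤ Real.sqrt s := by
  set r := Real.sqrt s with hr
  have hr0 : 0 ≤ r := Real.sqrt_nonneg s
  have hrs : r ^ 2 = s := Real.sq_sqrt hs
  have hE0 : 0 < Real.exp (-(2*s)) := Real.exp_pos _
  rcases le_or_gt r (1/2) with h | h
  · have h1 : 1 - 2*s ≤ Real.exp (-(2*s)) := by
      have := Real.add_one_le_exp (-(2*s)); linarith
    nlinarith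
  rcases le_or_gt 1 r with h2 | h2
  · nlinarith
  · have h3 : (2 - 2*s) ≤ Real.exp (1 - 2*s) := by
      have := Real.add_one_le_exp (1 - 2*s); linarith
    have key : 2 - 2*s ≤ Real.exp 1 * Real.exp (-(2*s)) := by
      rw [← Real.exp_add]; have : 1 + -(2*s) = 1 - 2*s := by ring
      rw [this]; exact h3
    have he : Real.exp 1 < 2.7182818286 := Real.exp_one_lt_d9
    have he0 : (0:ℝ) < Real.exp 1 := Real.exp_pos 1
    have p1 : (0:ℝ) ≤ (1 - r) * (2.7182818286 - Real.exp 1) :=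
      mul_nonneg (by linarith) (by linarith)
    have p2 : (0:ℝ) ≤ (1 - r) * (2*r - 1) := mul_nonneg (by linarith) (by linarith)
    nlinarith [key, p1, p2, he0, hr0, hE0, mul_pos he0 hE0]


private lemma norm_updCoord_sub {d : ℕ} (k : Fin d) (t : ℝ) (x y : Euc d) :
    ‖updCoord k t x - updCoord k t y‖ = distMinus k x y := by
  rw [EuclideanSpace.norm_eq, distMinus]
  congr 1
  rw [← Finset.add_sum_erase _ _ (Finset.mem_univ k)]
  have hk : ‖(updCoord k t x - updCoord k t y) k‖ ^ 2 = 0 := by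
    simp [updCoord, PiLp.sub_apply]
  rw [hk, zero_add]
  apply Finset.sum_congr rfl
  intro j hj
  have hjk : j ≠ k := Finset.ne_of_mem_erase hj
  simp [updCoord, PiLp.sub_apply, Function.update_apply, hjk, Real.norm_eq_abs, sq_abs]

private lemma continuous_updCoord {d : ℕ} (k : Fin d) (x : Euc d) :
    Continuous fun t : ℝ => updCoord k t x := by
  have h : (fun t : ℝ => updCoord k t x)
      = fun t : ℝ => x + (t - x k) • (EuclideanSpace.single k (1:ℝ)) := by
    funext t
    ext j
    by_cases hj : j = k
    · subst hj; simp [updCoord, PiLp.add_apply, PiLp.smul_apply, EuclideanSpace.single_apply]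
    · simp [updCoord, Function.update_apply, hj, PiLp.add_apply, PiLp.smul_apply,
        EuclideanSpace.single_apply]
  rw [h]
  exact continuous_const.add (((continuous_id.sub continuous_const).smul continuous_const))

/-- **TV continuity of conditionals of log-Lipschitz targets.** If the potential `U` is
`L`-Lipschitz and `e^{−U}` is integrable, then the one-dimensional conditional distributions
of `π ∝ e^{−U}` are `(√L, 1/2)`-TV continuous:
`‖π(·|x₋ₖ) − π(·|y₋ₖ)‖_TV ≤ √(L·|x₋ₖ − y₋ₖ|)`. -/
theorem conditionals_tv_of_log_lipschitz {d : ℕ} (L : ℝ) (hL : 0 < L) (U : Euc d → ℝ)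
    (hLip : ∀ x y : Euc d, |U x - U y| ≤ L * ‖x - y‖)
    (hInt : Integrable fun x : Euc d => Real.exp (-U x)) :
    ∀ (k : Fin d) (x y : Euc d),
      tvDist (gibbsCond U k x) (gibbsCond U k y)
        ≤ Real.sqrt (L * distMinus k x y) := by
  have hUc : Continuous U := by
    have : LipschitzWith (Real.toNNReal L) U := by
      apply LipschitzWith.of_dist_le_mul
      intro a b
      rw [Real.dist_eq, dist_eq_norm, Real.coe_toNNReal L hL.le]
      exact hLip a b
    exact this.continuous
  intro k x y
  set δ := distMinus k x y with hδdef
  have hδ0 : 0 ≤ δ := Real.sqrt_nonneg _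
  set s := L * δ with hsdef
  have hs0 : 0 ≤ s := mul_nonneg hL.le hδ0
  set F : ℝ → ℝ≥0∞ := fun t => ENNReal.ofReal (Real.exp (-U (updCoord k t x))) with hF
  set G : ℝ → ℝ≥0∞ := fun t => ENNReal.ofReal (Real.exp (-U (updCoord k t y))) with hG
  have hFmeas : Measurable F :=
    (ENNReal.continuous_ofReal.comp
      (Real.continuous_exp.comp (hUc.comp (continuous_updCoord k x)).neg)).measurable
  have hGmeas : Measurable G :=
    (ENNReal.continuous_ofReal.comp
      (Real.continuous_exp.comp (hUc.comp (continuous_updCoord k y)).neg)).measurable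
  -- pointwise bounds
  have hrpt : ∀ t : ℝ, |U (updCoord k t x) - U (updCoord k t y)| ≤ s := by
    intro t
    calc |U (updCoord k t x) - U (updCoord k t y)|
        ≤ L * ‖updCoord k t x - updCoord k t y‖ := hLip _ _
      _ = s := by rw [norm_updCoord_sub]
  have hFG : ∀ t, F t ≤ ENNReal.ofReal (Real.exp s) * G t := by
    intro t
    rw [hF, hG, ← ENNReal.ofReal_mul (Real.exp_pos s).le, ← Real.exp_add]
    apply ENNReal.ofReal_le_ofReal
    apply Real.exp_le_exp.mpr
    have := abs_le.mp (hrpt t)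
    linarith [this.1, this.2]
  have hGF : ∀ t, G t ≤ ENNReal.ofReal (Real.exp s) * F t := by
    intro t
    rw [hF, hG, ← ENNReal.ofReal_mul (Real.exp_pos s).le, ← Real.exp_add]
    apply ENNReal.ofReal_le_ofReal
    apply Real.exp_le_exp.mpr
    have := abs_le.mp (hrpt t)
    linarith [this.1, this.2]
  set Zx := ∫⁻ t, F t with hZx
  set Zy := ∫⁻ t, G t with hZy
  have hgx : gibbsCond U k x = Zx⁻¹ • (volume.withDensity F) := rfl
  have hgy : gibbsCond U k y = Zy⁻¹ • (volume.withDensity G) := rfl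
  have hes_ne_top : ENNReal.ofReal (Real.exp s) ≠ ∞ := ENNReal.ofReal_ne_top
  have hes_ne_zero : ENNReal.ofReal (Real.exp s) ≠ 0 := by
    simp [ENNReal.ofReal_eq_zero, not_le, Real.exp_pos s]
  have hZxy : Zx ≤ ENNReal.ofReal (Real.exp s) * Zy := by
    calc Zx ≤ ∫⁻ t, ENNReal.ofReal (Real.exp s) * G t := lintegral_mono hFG
      _ = ENNReal.ofReal (Real.exp s) * Zy := lintegral_const_mul' _ _ hes_ne_top
  have hZyx : Zy ≤ ENNReal.ofReal (Real.exp s) * Zx := by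
    calc Zy ≤ ∫⁻ t, ENNReal.ofReal (Real.exp s) * F t := lintegral_mono hGF
      _ = ENNReal.ofReal (Real.exp s) * Zx := lintegral_const_mul' _ _ hes_ne_top
  have hZx0 : Zx ≠ 0 := by
    intro h0
    have hae := (lintegral_eq_zero_iff hFmeas).mp h0
    have : (volume : Measure ℝ) ≠ 0 := by
      intro hv
      have := congrArg (fun μ : Measure ℝ => μ (Set.Icc (0:ℝ) 1)) hv
      simp [Real.volume_Icc] at this
    haveI : (ae (volume : Measure ℝ)).NeBot := ae_neBot.mpr this
    obtain ⟨t, ht⟩ := hae.exists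
    exact absurd ht (ne_of_gt (by simp [hF, ENNReal.ofReal_pos, Real.exp_pos]))
  have hZy0 : Zy ≠ 0 := by
    intro h0
    rw [h0, mul_zero] at hZxy
    exact hZx0 (le_antisymm hZxy zero_le)
  by_cases htop : Zx = ∞
  · have hytop : Zy = ∞ := by
      by_contra hyt
      have : ENNReal.ofReal (Real.exp s) * Zy ≠ ∞ := ENNReal.mul_ne_top hes_ne_top hyt
      exact this (top_le_iff.mp (htop ▸ hZxy))
    rw [hgx, hgy, htop, hytop]
    simp only [ENNReal.inv_top, zero_smul]
    have : tvDist (0 : Measure ℝ) 0 = 0 := by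
      rw [tvDist]
      haveI : Nonempty {s : Set ℝ // MeasurableSet s} := ⟨⟨∅, MeasurableSet.empty⟩⟩
      simp
    rw [this]
    positivity
  have hytop : Zy ≠ ∞ := by
    intro hyt
    have hne : ENNReal.ofReal (Real.exp s) * Zx ≠ ∞ := ENNReal.mul_ne_top hes_ne_top htop
    exact hne (top_le_iff.mp (hyt ▸ hZyx))
  -- finite, nonzero normalizers: probability measures
  have hinvx : Zx⁻¹ * Zx = 1 := ENNReal.inv_mul_cancel hZx0 htop
  have hinvy : Zy⁻¹ * Zy = 1 := ENNReal.inv_mul_cancel hZy0 hytop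
  set e2 : ℝ := Real.exp (-(2*s)) with he2
  have he20 : 0 < e2 := Real.exp_pos _
  have he21 : e2 ≤ 1 := Real.exp_le_one_iff.mpr (by linarith)
  have hexpprod : ENNReal.ofReal e2
      = ENNReal.ofReal (Real.exp (-s)) * ENNReal.ofReal (Real.exp (-s)) := by
    have hre : Real.exp (-(2*s)) = Real.exp (-s) * Real.exp (-s) := by
      rw [← Real.exp_add]; ring_nf
    rw [he2, hre, ENNReal.ofReal_mul (Real.exp_pos _).le]
  have hofinv : ENNReal.ofReal (Real.exp (-s)) = (ENNReal.ofReal (Real.exp s))⁻¹ := by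
    rw [Real.exp_neg, ← ENNReal.ofReal_inv_of_pos (Real.exp_pos s)]
  have hinvxy : ENNReal.ofReal (Real.exp (-s)) * Zx⁻¹ ≤ Zy⁻¹ := by
    have h1 : (ENNReal.ofReal (Real.exp s) * Zx)⁻¹ ≤ Zy⁻¹ := ENNReal.inv_le_inv' hZyx
    rwa [ENNReal.mul_inv (Or.inl hes_ne_zero) (Or.inl hes_ne_top), ← hofinv] at h1
  have hinvyx : ENNReal.ofReal (Real.exp (-s)) * Zy⁻¹ ≤ Zx⁻¹ := by
    have h1 : (ENNReal.ofReal (Real.exp s) * Zy)⁻¹ ≤ Zx⁻¹ := ENNReal.inv_le_inv' hZxy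
    rwa [ENNReal.mul_inv (Or.inl hes_ne_zero) (Or.inl hes_ne_top), ← hofinv] at h1
  have hFGpt : ∀ t, ENNReal.ofReal (Real.exp (-s)) * F t ≤ G t := by
    intro t
    rw [hF, hG, ← ENNReal.ofReal_mul (Real.exp_pos _).le, ← Real.exp_add]
    apply ENNReal.ofReal_le_ofReal
    apply Real.exp_le_exp.mpr
    have := abs_le.mp (hrpt t)
    linarith [this.1, this.2]
  have hGFpt : ∀ t, ENNReal.ofReal (Real.exp (-s)) * G t ≤ F t := by
    intro t
    rw [hF, hG, ← ENNReal.ofReal_mul (Real.exp_pos _).le, ← Real.exp_add]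
    apply ENNReal.ofReal_le_ofReal
    apply Real.exp_le_exp.mpr
    have := abs_le.mp (hrpt t)
    linarith [this.1, this.2]
  have key : ∀ S : Set ℝ, MeasurableSet S →
      |(gibbsCond U k x S).toReal - (gibbsCond U k y S).toReal| ≤ 1 - e2 := by
    intro S hS
    have hxS : gibbsCond U k x S = Zx⁻¹ * ∫⁻ t in S, F t := by
      rw [hgx, Measure.smul_apply, withDensity_apply _ hS, smul_eq_mul]
    have hyS : gibbsCond U k y S = Zy⁻¹ * ∫⁻ t in S, G t := by
      rw [hgy, Measure.smul_apply, withDensity_apply _ hS, smul_eq_mul]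
    have hx1 : gibbsCond U k x S ≤ 1 := by
      rw [hxS]
      calc Zx⁻¹ * ∫⁻ t in S, F t ≤ Zx⁻¹ * Zx :=
            mul_le_mul_right (setLIntegral_le_lintegral S F) _
        _ = 1 := hinvx
    have hy1 : gibbsCond U k y S ≤ 1 := by
      rw [hyS]
      calc Zy⁻¹ * ∫⁻ t in S, G t ≤ Zy⁻¹ * Zy :=
            mul_le_mul_right (setLIntegral_le_lintegral S G) _
        _ = 1 := hinvy
    have hFGS : ENNReal.ofReal (Real.exp (-s)) * ∫⁻ t in S, F t ≤ ∫⁻ t in S, G t := by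
      rw [← lintegral_const_mul' _ _ ENNReal.ofReal_ne_top]
      exact lintegral_mono hFGpt
    have hGFS : ENNReal.ofReal (Real.exp (-s)) * ∫⁻ t in S, G t ≤ ∫⁻ t in S, F t := by
      rw [← lintegral_const_mul' _ _ ENNReal.ofReal_ne_top]
      exact lintegral_mono hGFpt
    have hxylow : ENNReal.ofReal e2 * gibbsCond U k x S ≤ gibbsCond U k y S := by
      rw [hxS, hyS, hexpprod]
      calc ENNReal.ofReal (Real.exp (-s)) * ENNReal.ofReal (Real.exp (-s))
            * (Zx⁻¹ * ∫⁻ t in S, F t)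
          = (ENNReal.ofReal (Real.exp (-s)) * Zx⁻¹)
            * (ENNReal.ofReal (Real.exp (-s)) * ∫⁻ t in S, F t) := by ring
        _ ≤ Zy⁻¹ * ∫⁻ t in S, G t := mul_le_mul' hinvxy hFGS
    have hyxlow : ENNReal.ofReal e2 * gibbsCond U k y S ≤ gibbsCond U k x S := by
      rw [hxS, hyS, hexpprod]
      calc ENNReal.ofReal (Real.exp (-s)) * ENNReal.ofReal (Real.exp (-s))
            * (Zy⁻¹ * ∫⁻ t in S, G t)
          = (ENNReal.ofReal (Real.exp (-s)) * Zy⁻¹)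
            * (ENNReal.ofReal (Real.exp (-s)) * ∫⁻ t in S, G t) := by ring
        _ ≤ Zx⁻¹ * ∫⁻ t in S, F t := mul_le_mul' hinvyx hGFS
    have hxne : gibbsCond U k x S ≠ ∞ := (lt_of_le_of_lt hx1 ENNReal.one_lt_top).ne
    have hyne : gibbsCond U k y S ≠ ∞ := (lt_of_le_of_lt hy1 ENNReal.one_lt_top).ne
    have ha1 : (gibbsCond U k x S).toReal ≤ 1 := by
      have := ENNReal.toReal_mono ENNReal.one_ne_top hx1
      simpa using this
    have hb1 : (gibbsCond U k y S).toReal ≤ 1 := by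
      have := ENNReal.toReal_mono ENNReal.one_ne_top hy1
      simpa using this
    have ha0 : 0 ≤ (gibbsCond U k x S).toReal := ENNReal.toReal_nonneg
    have hb0 : 0 ≤ (gibbsCond U k y S).toReal := ENNReal.toReal_nonneg
    have hr1 : e2 * (gibbsCond U k x S).toReal ≤ (gibbsCond U k y S).toReal := by
      have := ENNReal.toReal_mono hyne hxylow
      rwa [ENNReal.toReal_mul, ENNReal.toReal_ofReal he20.le] at this
    have hr2 : e2 * (gibbsCond U k y S).toReal ≤ (gibbsCond U k x S).toReal := by
      have := ENNReal.toReal_mono hxne hyxlow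
      rwa [ENNReal.toReal_mul, ENNReal.toReal_ofReal he20.le] at this
    rw [abs_sub_le_iff]
    constructor <;> nlinarith
  haveI : Nonempty {S : Set ℝ // MeasurableSet S} := ⟨⟨∅, MeasurableSet.empty⟩⟩
  calc tvDist (gibbsCond U k x) (gibbsCond U k y) ≤ 1 - e2 :=
        ciSup_le (fun S => key S.1 S.2)
    _ ≤ Real.sqrt s := tv_aux_exp s hs0


end
end
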